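/- Let (λ•, s) and (μ•, s) be two charged r-multipartitions (with the same ℓ and the same multicharge s). Then the following are equivalent: (i) Res_ℓ(λ•, s) = Res_ℓ(μ•, s); (ii) Θ_ℓ(λ•, s) = Θ_ℓ(μ•, s) and |λ•| = |μ•|; (iii) Θ_ℓ(λ•, s) = Θ_ℓ(μ•, s) and Ω_ℓ(λ•, s) = Ω_ℓ(μ•, s). (By Lyle–Mathas, condition (i) means exactly that the Specht modules indexed by λ• and μ• lie in the same block of the Ariki–Koike algebra H_{n,r}(ℓ,s).) -/

import Mathlib

/-- A partition: a non-increasing function `ℕ → ℕ` that is eventually zero. -/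
def IsPartition (f : ℕ → ℕ) : Prop :=
  (∀ m n : ℕ, m ≤ n → f n ≤ f m) ∧ ∃ N : ℕ, ∀ n : ℕ, N ≤ n → f n = 0

/-- The Young diagram of `f`: the set of pairs `(a,b)` with `a < f b`. -/
def young (f : ℕ → ℕ) : Set (ℕ × ℕ) := {p : ℕ × ℕ | p.1 < f p.2}

/-- A node `p` of `f` is removable if deleting it leaves the Young diagram of a
partition. -/
def IsRemovable (f : ℕ → ℕ) (p : ℕ × ℕ) : Prop :=
  p ∈ young f ∧ ∃ g : ℕ → ℕ, IsPartition g ∧ young g = young f \ {p}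

/-- A pair `p ∉ Y(f)` is an addable node if adding it gives the Young diagram of
a partition. -/
def IsAddable (f : ℕ → ℕ) (p : ℕ × ℕ) : Prop :=
  p ∉ young f ∧ ∃ g : ℕ → ℕ, IsPartition g ∧ young g = young f ∪ {p}

/-- The residue `b - a + k ∈ ℤ/ℓℤ` of a node `p = (a,b)` with charge `k`. -/
def nodeRes (ℓ : ℕ) (k : ZMod ℓ) (p : ℕ × ℕ) : ZMod ℓ :=
  (p.2 : ZMod ℓ) - (p.1 : ZMod ℓ) + k

/-- Nodes `(a,b,c)` of an `r`-multipartition: `a < λ^c_b`. -/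
def mNodes {r : ℕ} (Λ : Fin r → ℕ → ℕ) : Set (ℕ × ℕ × Fin r) :=
  {q : ℕ × ℕ × Fin r | q.1 < Λ q.2.2 q.2.1}

/-- The residue vector: `(mRes ℓ Λ s i)` is the number of nodes of `Λ` of
residue `i` with respect to the multicharge `s`. -/
noncomputable def mRes (ℓ : ℕ) {r : ℕ} (Λ : Fin r → ℕ → ℕ) (s : Fin r → ZMod ℓ) (i : ZMod ℓ) : ℤ :=
  ((mNodes Λ ∩ {q : ℕ × ℕ × Fin r | nodeRes ℓ (s q.2.2) (q.1, q.2.1) = i}).ncard : ℤ)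

/-- `wMulti ℓ s i = #{j | s_j = i}`. -/
def wMulti (ℓ : ℕ) {r : ℕ} (s : Fin r → ZMod ℓ) (i : ZMod ℓ) : ℤ :=
  ((Finset.univ.filter fun j : Fin r => s j = i).card : ℤ)

/-- The hub: number of removable `i`-nodes minus number of addable `i`-nodes. -/
noncomputable def hub (ℓ : ℕ) {r : ℕ} (Λ : Fin r → ℕ → ℕ) (s : Fin r → ZMod ℓ) (i : ZMod ℓ) : ℤ :=
  (({q : ℕ × ℕ × Fin r | IsRemovable (Λ q.2.2) (q.1, q.2.1) ∧
      nodeRes ℓ (s q.2.2) (q.1, q.2.1) = i}).ncard : ℤ) -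
  (({q : ℕ × ℕ × Fin r | IsAddable (Λ q.2.2) (q.1, q.2.1) ∧
      nodeRes ℓ (s q.2.2) (q.1, q.2.1) = i}).ncard : ℤ)

/-- The weight `Ω_ℓ(λ•,s) = Σ_j d_{s_j} - (1/2) Σ_i (d_i - d_{i+1})²`,
computed in `ℚ`. -/
noncomputable def weight (ℓ : ℕ) [NeZero ℓ] {r : ℕ} (Λ : Fin r → ℕ → ℕ)
    (s : Fin r → ZMod ℓ) : ℚ :=
  (∑ j : Fin r, (mRes ℓ Λ s (s j) : ℚ)) -
    (1 / 2) * ∑ i : ZMod ℓ, ((mRes ℓ Λ s i - mRes ℓ Λ s (i + 1) : ℤ) : ℚ) ^ 2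

lemma height_eq {m n : ℕ} (h : ∀ x, x < m ↔ x < n) : m = n := by
  have h1 := h m; have h2 := h n; omega

lemma isRemovable_iff {f : ℕ → ℕ} (hf : IsPartition f) (a b : ℕ) :
    IsRemovable f (a, b) ↔ a + 1 = f b ∧ f (b+1) < f b := by
  constructor
  · rintro ⟨hmem, g, hg, hyoung⟩
    have hab : a < f b := hmem
    have hcol : ∀ x y, x < g y ↔ (x < f y ∧ ¬(x = a ∧ y = b)) := by
      intro x y
      have h0 : ((x,y) ∈ young g) ↔ ((x,y) ∈ young f \ {(a,b)}) := by rw [hyoung]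
      simp only [young, Set.mem_diff, Set.mem_setOf_eq, Set.mem_singleton_iff,
        Prod.ext_iff] at h0
      tauto
    have h1 := hcol a b
    have h2 := hcol (a+1) b
    have hfb : a + 1 = f b := by omega
    refine ⟨hfb, ?_⟩
    have hgb : g b = a := height_eq (fun x => by have := hcol x b; omega)
    have hg1 : g (b+1) = f (b+1) := height_eq (fun x => by have := hcol x (b+1); omega)
    have := hg.1 b (b+1) (by omega)
    omega
  · rintro ⟨hfb, hlt⟩
    refine ⟨show a < f b by omega, Function.update f b a, ⟨?_, ?_⟩, ?_⟩
    · intro m n hmn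
      rw [Function.update_apply, Function.update_apply]
      split_ifs with h1 h2 h2
      · omega
      · have := hf.1 m b (by omega); omega
      · have := hf.1 (b+1) n (by omega); omega
      · exact hf.1 m n hmn
    · obtain ⟨N, hN⟩ := hf.2
      exact ⟨N + b + 1, fun n hn => by
        rw [Function.update_of_ne (by omega)]; exact hN n (by omega)⟩
    · ext ⟨x,y⟩
      simp only [young, Set.mem_diff, Set.mem_setOf_eq, Set.mem_singleton_iff, Prod.ext_iff,
        Function.update_apply]
      split_ifs with hy
      · subst hy; constructor
        · intro h; exact ⟨by omega, by omega⟩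
        · rintro ⟨h1, h2⟩; omega
      · constructor
        · intro h; exact ⟨h, by tauto⟩
        · tauto

lemma isAddable_iff {f : ℕ → ℕ} (hf : IsPartition f) (a b : ℕ) :
    IsAddable f (a, b) ↔ a = f b ∧ (b = 0 ∨ f b < f (b-1)) := by
  constructor
  · rintro ⟨hmem, g, hg, hyoung⟩
    have hab : ¬ (a < f b) := hmem
    have hcol : ∀ x y, x < g y ↔ (x < f y ∨ (x = a ∧ y = b)) := by
      intro x y
      have h0 : ((x,y) ∈ young g) ↔ ((x,y) ∈ young f ∪ {(a,b)}) := by rw [hyoung]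
      simp only [young, Set.mem_union, Set.mem_setOf_eq, Set.mem_singleton_iff,
        Prod.ext_iff] at h0
      tauto
    have h1 := hcol a b
    have h2 := hcol (f b) b
    have hfb : a = f b := by omega
    refine ⟨hfb, ?_⟩
    rcases Nat.eq_zero_or_pos b with rfl | hb
    · exact Or.inl rfl
    · right
      have hgb : g b = f b + 1 := height_eq (fun x => by have := hcol x b; omega)
      have hg1 : g (b-1) = f (b-1) := height_eq (fun x => by have := hcol x (b-1); omega)
      have := hg.1 (b-1) b (by omega)
      omega
  · rintro ⟨hfb, hor⟩
    refine ⟨show ¬ ((a,b) ∈ young f) by simp only [young, Set.mem_setOf_eq]; omega,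
      Function.update f b (f b + 1), ⟨?_, ?_⟩, ?_⟩
    · intro m n hmn
      rw [Function.update_apply, Function.update_apply]
      split_ifs with h1 h2 h2
      · omega
      · have := hf.1 m (b-1) (by omega)
        have hb0 : b ≠ 0 := by omega
        rcases hor with h | h
        · omega
        · omega
      · have := hf.1 b n (by omega); omega
      · exact hf.1 m n hmn
    · obtain ⟨N, hN⟩ := hf.2
      exact ⟨N + b + 1, fun n hn => by
        rw [Function.update_of_ne (by omega)]; exact hN n (by omega)⟩
    · ext ⟨x,y⟩
      simp only [young, Set.mem_union, Set.mem_setOf_eq, Set.mem_singleton_iff, Prod.ext_iff,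
        Function.update_apply]
      split_ifs with hy
      · subst hy; constructor
        · intro h; omega
        · intro h; omega
      · constructor
        · tauto
        · rintro (h | ⟨h1, h2⟩)
          · exact h
          · exact absurd h2 hy

def cnt (ℓ : ℕ) (m : ℕ) (t : ZMod ℓ) : ℤ :=
  ∑ a ∈ Finset.range m, if (a : ZMod ℓ) = t then 1 else 0

lemma cnt_zero (ℓ : ℕ) (t : ZMod ℓ) : cnt ℓ 0 t = 0 := by simp [cnt]

lemma cnt_succ (ℓ : ℕ) (m : ℕ) (t : ZMod ℓ) :
    cnt ℓ (m+1) t = cnt ℓ m t + (if ((m : ZMod ℓ) = t) then 1 else 0) :=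
  Finset.sum_range_succ _ _

lemma ind_congr {P Q : Prop} [Decidable P] [Decidable Q] (h : P ↔ Q) :
    (if P then (1:ℤ) else 0) = if Q then 1 else 0 := by simp [h]

lemma col_key (ℓ : ℕ) (t : ZMod ℓ) : ∀ m : ℕ,
    2 * cnt ℓ (m+1) t - cnt ℓ (m+1) (t+1) - cnt ℓ (m+1) (t-1)
      = (if ((m : ZMod ℓ) = t) then 1 else 0) - (if ((m : ZMod ℓ) + 1 = t) then 1 else 0)
        + (if (t = 0) then 1 else 0) - (if (t + 1 = 0) then 1 else 0) := by
  intro m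
  induction m with
  | zero =>
    simp only [cnt_succ, cnt_zero, Nat.cast_zero, zero_add]
    rw [ind_congr (show ((0:ZMod ℓ) = t + 1) ↔ (t + 1 = 0) from
          ⟨fun h => h.symm, fun h => h.symm⟩),
        ind_congr (show ((0:ZMod ℓ) = t - 1) ↔ ((0:ZMod ℓ) + 1 = t) from by
          constructor <;> intro h <;> linear_combination h),
        ind_congr (show ((0:ZMod ℓ) = t) ↔ (t = 0) from ⟨fun h => h.symm, fun h => h.symm⟩)]
    ring
  | succ m ih =>
    rw [cnt_succ ℓ (m+1) t, cnt_succ ℓ (m+1) (t+1), cnt_succ ℓ (m+1) (t-1)]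
    have e1 : ((↑(m+1) : ZMod ℓ) = t + 1) ↔ ((m : ZMod ℓ) = t) := by
      push_cast; constructor <;> intro h <;> linear_combination h
    have e2 : ((↑(m+1) : ZMod ℓ) = t - 1) ↔ ((↑(m+1) : ZMod ℓ) + 1 = t) := by
      constructor <;> intro h <;> linear_combination h
    rw [ind_congr e1, ind_congr e2]
    have e3 : ((↑(m+1) : ZMod ℓ) = t) ↔ ((m : ZMod ℓ) + 1 = t) := by push_cast; tauto
    rw [ind_congr e3]
    push_cast
    linarith [ih]

def tres (ℓ : ℕ) (k i : ZMod ℓ) (b : ℕ) : ZMod ℓ := (b : ZMod ℓ) + k - i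

lemma tres_succ (ℓ : ℕ) (k i : ZMod ℓ) (b : ℕ) :
    tres ℓ k i (b+1) = tres ℓ k i b + 1 := by
  simp only [tres]; push_cast; ring

noncomputable def Hterm (ℓ : ℕ) (f : ℕ → ℕ) (k i : ZMod ℓ) (b : ℕ) : ℤ :=
  (if (f (b+1) < f b ∧ ((f b - 1 : ℕ) : ZMod ℓ) = tres ℓ k i b) then 1 else 0)
  - (if ((b = 0 ∨ f b < f (b-1)) ∧ ((f b : ℕ) : ZMod ℓ) = tres ℓ k i b) then 1 else 0)

noncomputable def Gterm (ℓ : ℕ) (f : ℕ → ℕ) (k i : ZMod ℓ) (b : ℕ) : ℤ :=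
  2 * cnt ℓ (f b) (tres ℓ k i b) - cnt ℓ (f b) (tres ℓ k i b + 1)
    - cnt ℓ (f b) (tres ℓ k i b - 1)

noncomputable def uFun (ℓ : ℕ) (f : ℕ → ℕ) (k i : ZMod ℓ) (b : ℕ) : ℤ :=
  if (1 ≤ b ∧ f (b-1) = f b ∧ ((f b : ℕ) : ZMod ℓ) = tres ℓ k i b) then 1 else 0

noncomputable def vFun (ℓ : ℕ) (k i : ZMod ℓ) (b : ℕ) : ℤ :=
  if ((0 : ZMod ℓ) = tres ℓ k i b) then 1 else 0


lemma column_identity (ℓ : ℕ) (f : ℕ → ℕ) (k i : ZMod ℓ) (b : ℕ)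
    (h1 : f (b+1) ≤ f b) (h2 : 1 ≤ b → f b ≤ f (b-1)) :
    Gterm ℓ f k i b - Hterm ℓ f k i b
      = (uFun ℓ f k i (b+1) - uFun ℓ f k i b) + (vFun ℓ k i b - vFun ℓ k i (b+1)) := by
  have hsucc : tres ℓ k i (b+1) = tres ℓ k i b + 1 := tres_succ ℓ k i b
  rcases hm : f b with _ | mm
  · have hb1 : f (b+1) = 0 := by omega
    unfold Gterm Hterm uFun vFun
    rw [hsucc, hm, hb1]
    simp only [Nat.add_sub_cancel, le_add_iff_nonneg_left, zero_le, true_and, cnt_zero,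
      Nat.cast_zero, Nat.lt_irrefl, false_and, if_false, hm, eq_self_iff_true]
    by_cases hA : (0 : ZMod ℓ) = tres ℓ k i b
    · simp only [iff_true_intro hA, and_true, true_and]
      split_ifs <;> omega
    · simp only [iff_false_intro hA, and_false, if_false]
      split_ifs <;> omega

  · unfold Gterm Hterm uFun vFun
    rw [tres_succ ℓ k i b, hm]
    have key := col_key ℓ (tres ℓ k i b) mm
    set T := tres ℓ k i b with hT
    rw [key]
    simp only [Nat.add_sub_cancel, hm, le_add_iff_nonneg_left, zero_le, true_and]
    push_cast
    rw [ind_congr (show (T = 0) ↔ ((0:ZMod ℓ) = T) from eq_comm),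
        ind_congr (show (T + 1 = 0) ↔ ((0:ZMod ℓ) = T + 1) from eq_comm)]
    have e3 : (mm + 1 = f (b+1) ∧ ((f (b+1) : ℕ) : ZMod ℓ) = T + 1)
        ↔ (mm + 1 = f (b+1) ∧ ((mm : ℕ) : ZMod ℓ) = T) := by
      constructor <;> rintro ⟨hh, hc⟩ <;> refine ⟨hh, ?_⟩
      · rw [← hh] at hc; push_cast at hc; linear_combination hc
      · rw [← hh]; push_cast; linear_combination hc
    rw [ind_congr e3]
    rw [hm] at h1
    rcases Nat.eq_zero_or_pos b with hb | hb
    all_goals (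
      first
      | (have h2' := h2 hb; rw [hm] at h2')
      | skip)
    all_goals (
      rcases eq_or_ne ((mm : ℕ) : ZMod ℓ) T with hA | hA
      · rcases eq_or_ne (T + 1) T with hB | hB
        · simp only [hA, hB, eq_self_iff_true, and_true, true_and, and_false, false_and,
            if_true, if_false]
          split_ifs <;> omega
        · simp only [hA, hB, eq_self_iff_true, and_true, true_and, and_false, false_and,
            if_true, if_false]
          split_ifs <;> omega
      · rcases eq_or_ne (((mm : ℕ) : ZMod ℓ) + 1) T with hB | hB
        · simp only [hA, hB, eq_self_iff_true, and_true, true_and, and_false, false_and,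
            if_true, if_false]
          split_ifs <;> omega
        · simp only [hA, hB, eq_self_iff_true, and_true, true_and, and_false, false_and,
            if_true, if_false]
          split_ifs <;> omega)


lemma nodeRes_iff (ℓ : ℕ) (k i : ZMod ℓ) (a b : ℕ) :
    nodeRes ℓ k (a, b) = i ↔ (a : ZMod ℓ) = tres ℓ k i b := by
  unfold nodeRes tres
  constructor <;> intro h <;> linear_combination -h

section Conv
variable (ℓ : ℕ) {r : ℕ} (Λ : Fin r → ℕ → ℕ) (s : Fin r → ZMod ℓ) (i : ZMod ℓ)
variable (N B : ℕ)

-- generic: a set given by a predicate agrees with a filtered finset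
lemma set_ncard_eq_sum (P : ℕ × ℕ × Fin r → Prop) [DecidablePred P]
    (hbound : ∀ q : ℕ × ℕ × Fin r, P q → q.1 < B + 1 ∧ q.2.1 < N) :
    (({q : ℕ × ℕ × Fin r | P q}).ncard : ℤ)
      = ∑ c : Fin r, ∑ b ∈ Finset.range N, ∑ a ∈ Finset.range (B+1),
          (if P (a, b, c) then 1 else 0) := by
  have hset : {q : ℕ × ℕ × Fin r | P q}
      = ↑((Finset.range (B+1) ×ˢ Finset.range N ×ˢ Finset.univ).filter P) := by
    ext ⟨a, b, c⟩
    simp only [Set.mem_setOf_eq, Finset.coe_filter, Finset.mem_product, Finset.mem_range,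
      Finset.mem_univ, and_true]
    constructor
    · intro h; exact ⟨⟨(hbound _ h).1, (hbound _ h).2⟩, h⟩
    · tauto
  rw [hset, Set.ncard_coe_finset, Finset.card_filter]
  push_cast
  rw [Finset.sum_product]
  rw [Finset.sum_comm]
  rw [Finset.sum_product]
  exact Finset.sum_comm

-- collapse inner sum for node-counting
lemma inner_nodes (f : ℕ → ℕ) (k : ZMod ℓ) (b : ℕ) (hf : f b ≤ B) :
    (∑ a ∈ Finset.range (B+1),
      (if (a < f b ∧ nodeRes ℓ k (a, b) = i) then (1:ℤ) else 0))
      = cnt ℓ (f b) (tres ℓ k i b) := by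
  rw [show Finset.range (B+1) = Finset.range (f b) ∪ (Finset.range (B+1) \ Finset.range (f b))
        from by rw [Finset.union_sdiff_of_subset]; exact Finset.range_subset_range.mpr (by omega),
      Finset.sum_union (Finset.disjoint_sdiff)]
  have h2 : ∀ a ∈ Finset.range (B+1) \ Finset.range (f b),
      (if (a < f b ∧ nodeRes ℓ k (a, b) = i) then (1:ℤ) else 0) = 0 := by
    intro a ha
    simp only [Finset.mem_sdiff, Finset.mem_range] at ha
    simp only [ite_eq_right_iff]
    intro h; omega
  rw [Finset.sum_eq_zero h2, add_zero]
  unfold cnt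
  refine Finset.sum_congr rfl fun a ha => ?_
  simp only [Finset.mem_range] at ha
  congr 1
  rw [eq_iff_iff, nodeRes_iff]
  exact and_iff_right ha

-- collapse inner sum for removable nodes
lemma inner_rem (f : ℕ → ℕ) (k : ZMod ℓ) (b : ℕ) (hf : f b ≤ B) :
    (∑ a ∈ Finset.range (B+1),
      (if ((a + 1 = f b ∧ f (b+1) < f b) ∧ nodeRes ℓ k (a, b) = i) then (1:ℤ) else 0))
      = if (f (b+1) < f b ∧ ((f b - 1 : ℕ) : ZMod ℓ) = tres ℓ k i b) then 1 else 0 := by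
  by_cases hr : f (b+1) < f b
  · rw [Finset.sum_eq_single_of_mem (f b - 1) (Finset.mem_range.mpr (by omega))]
    · congr 1
      rw [eq_iff_iff, nodeRes_iff]
      constructor
      · rintro ⟨_, h⟩; exact ⟨hr, h⟩
      · rintro ⟨_, h⟩; exact ⟨⟨by omega, hr⟩, h⟩
    · intro a _ ha
      rw [if_neg]; rintro ⟨⟨h1, _⟩, _⟩; omega
  · rw [if_neg (by tauto), Finset.sum_eq_zero]
    intro a _
    rw [if_neg]; rintro ⟨⟨_, h⟩, _⟩; exact hr h

-- collapse inner sum for addable nodes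
lemma inner_add (f : ℕ → ℕ) (k : ZMod ℓ) (b : ℕ) (hf : f b ≤ B) :
    (∑ a ∈ Finset.range (B+1),
      (if ((a = f b ∧ (b = 0 ∨ f b < f (b-1))) ∧ nodeRes ℓ k (a, b) = i) then (1:ℤ) else 0))
      = if ((b = 0 ∨ f b < f (b-1)) ∧ ((f b : ℕ) : ZMod ℓ) = tres ℓ k i b) then 1 else 0 := by
  by_cases hr : b = 0 ∨ f b < f (b-1)
  · rw [Finset.sum_eq_single_of_mem (f b) (Finset.mem_range.mpr (by omega))]
    · congr 1
      rw [eq_iff_iff, nodeRes_iff]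
      constructor
      · rintro ⟨_, h⟩; exact ⟨hr, h⟩
      · rintro ⟨_, h⟩; exact ⟨⟨rfl, hr⟩, h⟩
    · intro a _ ha
      rw [if_neg]; rintro ⟨⟨h1, _⟩, _⟩; exact ha h1
  · rw [if_neg (by tauto), Finset.sum_eq_zero]
    intro a _
    rw [if_neg]; rintro ⟨⟨_, h⟩, _⟩; exact hr h

end Conv

section Main
variable (ℓ : ℕ) {r : ℕ} (Λ : Fin r → ℕ → ℕ) (s : Fin r → ZMod ℓ)

lemma exists_bounds (hΛ : ∀ c, IsPartition (Λ c)) :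
    ∃ N B : ℕ, 1 ≤ N ∧ (∀ c b, N - 1 ≤ b → Λ c b = 0) ∧ (∀ c b, Λ c b ≤ B) := by
  choose Nc hNc using fun c => (hΛ c).2
  refine ⟨(Finset.univ.sup Nc) + 1, Finset.univ.sup (fun c => Λ c 0), by omega, ?_, ?_⟩
  · intro c b hb
    exact hNc c b (le_trans (Finset.le_sup (Finset.mem_univ c)) (by omega))
  · intro c b
    exact le_trans ((hΛ c).1 0 b (Nat.zero_le b)) (Finset.le_sup (f := fun c => Λ c 0) (Finset.mem_univ c))

lemma mRes_eq_sum (hΛ : ∀ c, IsPartition (Λ c)) (i : ZMod ℓ) (N B : ℕ) (hN1 : 1 ≤ N)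
    (hN : ∀ c b, N - 1 ≤ b → Λ c b = 0) (hB : ∀ c b, Λ c b ≤ B) :
    mRes ℓ Λ s i = ∑ c : Fin r, ∑ b ∈ Finset.range N, cnt ℓ (Λ c b) (tres ℓ (s c) i b) := by
  classical
  have hset : mNodes Λ ∩ {q : ℕ × ℕ × Fin r | nodeRes ℓ (s q.2.2) (q.1, q.2.1) = i}
      = {q : ℕ × ℕ × Fin r | q.1 < Λ q.2.2 q.2.1 ∧ nodeRes ℓ (s q.2.2) (q.1, q.2.1) = i} :=
    rfl
  rw [mRes, hset, set_ncard_eq_sum N B _ ?hb]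
  case hb =>
    rintro ⟨a, b, c⟩ ⟨h1, _⟩
    dsimp only at h1 ⊢
    constructor
    · have := hB c b; omega
    · by_contra hcon
      have := hN c b (by omega)
      omega
  refine Finset.sum_congr rfl fun c _ => Finset.sum_congr rfl fun b _ => ?_
  exact inner_nodes ℓ i B (Λ c) (s c) b (hB c b)

lemma hub_eq_sum (hΛ : ∀ c, IsPartition (Λ c)) (i : ZMod ℓ) (N B : ℕ) (hN1 : 1 ≤ N)
    (hN : ∀ c b, N - 1 ≤ b → Λ c b = 0) (hB : ∀ c b, Λ c b ≤ B) :
    hub ℓ Λ s i = ∑ c : Fin r, ∑ b ∈ Finset.range N, Hterm ℓ (Λ c) (s c) i b := by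
  classical
  have hsetR : {q : ℕ × ℕ × Fin r | IsRemovable (Λ q.2.2) (q.1, q.2.1) ∧
        nodeRes ℓ (s q.2.2) (q.1, q.2.1) = i}
      = {q : ℕ × ℕ × Fin r | (q.1 + 1 = Λ q.2.2 q.2.1 ∧ Λ q.2.2 (q.2.1+1) < Λ q.2.2 q.2.1) ∧
        nodeRes ℓ (s q.2.2) (q.1, q.2.1) = i} := by
    ext ⟨a, b, c⟩
    simp only [Set.mem_setOf_eq]
    rw [isRemovable_iff (hΛ c)]
  have hsetA : {q : ℕ × ℕ × Fin r | IsAddable (Λ q.2.2) (q.1, q.2.1) ∧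
        nodeRes ℓ (s q.2.2) (q.1, q.2.1) = i}
      = {q : ℕ × ℕ × Fin r | (q.1 = Λ q.2.2 q.2.1 ∧ (q.2.1 = 0 ∨ Λ q.2.2 q.2.1 < Λ q.2.2 (q.2.1-1))) ∧
        nodeRes ℓ (s q.2.2) (q.1, q.2.1) = i} := by
    ext ⟨a, b, c⟩
    simp only [Set.mem_setOf_eq]
    rw [isAddable_iff (hΛ c)]
  rw [hub, hsetR, hsetA, set_ncard_eq_sum N B _ ?hbR, set_ncard_eq_sum N B _ ?hbA]
  case hbR =>
    rintro ⟨a, b, c⟩ ⟨⟨h1, h2⟩, _⟩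
    dsimp only at h1 h2 ⊢
    constructor
    · have := hB c b; omega
    · by_contra hcon
      have := hN c b (by omega)
      omega
  case hbA =>
    rintro ⟨a, b, c⟩ ⟨⟨h1, h2⟩, _⟩
    dsimp only at h1 h2 ⊢
    constructor
    · have := hB c b; omega
    · rcases h2 with h2 | h2
      · omega
      · by_contra hcon
        have := hN c (b-1) (by omega)
        omega
  rw [← Finset.sum_sub_distrib]
  refine Finset.sum_congr rfl fun c _ => ?_
  rw [← Finset.sum_sub_distrib]
  refine Finset.sum_congr rfl fun b _ => ?_
  rw [Hterm, inner_rem ℓ i B (Λ c) (s c) b (hB c b), inner_add ℓ i B (Λ c) (s c) b (hB c b)]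

lemma sum_Hterm (f : ℕ → ℕ) (hf : IsPartition f) (k i : ZMod ℓ) (N : ℕ) (hN1 : 1 ≤ N)
    (hz : ∀ b, N - 1 ≤ b → f b = 0) :
    ∑ b ∈ Finset.range N, Hterm ℓ f k i b
      = (∑ b ∈ Finset.range N, Gterm ℓ f k i b) - (if k = i then 1 else 0) := by
  have hcol : ∀ b ∈ Finset.range N, Gterm ℓ f k i b - Hterm ℓ f k i b
      = (uFun ℓ f k i (b+1) - uFun ℓ f k i b) + (vFun ℓ k i b - vFun ℓ k i (b+1)) := by
    intro b _
    exact column_identity ℓ f k i b (hf.1 b (b+1) (by omega))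
      (fun hb => hf.1 (b-1) b (by omega))
  have hsum : ∑ b ∈ Finset.range N, (Gterm ℓ f k i b - Hterm ℓ f k i b)
      = (uFun ℓ f k i N - uFun ℓ f k i 0)
        + (vFun ℓ k i 0 - vFun ℓ k i N) := by
    rw [Finset.sum_congr rfl hcol, Finset.sum_add_distrib, Finset.sum_range_sub,
      Finset.sum_range_sub']
  have hu0 : uFun ℓ f k i 0 = 0 := by simp [uFun]
  have huN : uFun ℓ f k i N = vFun ℓ k i N := by
    have h1 : f (N-1) = 0 := hz (N-1) (by omega)
    have h2 : f N = 0 := hz N (by omega)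
    rw [uFun, vFun, h2, h1]
    simp [hN1]
  have hv0 : vFun ℓ k i 0 = (if k = i then 1 else 0) := by
    rw [vFun]
    congr 1
    rw [eq_iff_iff, tres]
    push_cast
    constructor <;> intro h <;> linear_combination -h
  rw [Finset.sum_sub_distrib] at hsum
  rw [hu0, huN, hv0] at hsum
  omega

lemma tres_down (k i : ZMod ℓ) (b : ℕ) : tres ℓ k (i-1) b = tres ℓ k i b + 1 := by
  rw [tres, tres]; ring
lemma tres_up (k i : ZMod ℓ) (b : ℕ) : tres ℓ k (i+1) b = tres ℓ k i b - 1 := by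
  rw [tres, tres]; ring

lemma wMulti_eq_sum (i : ZMod ℓ) :
    wMulti ℓ s i = ∑ c : Fin r, (if s c = i then (1:ℤ) else 0) := by
  classical
  rw [wMulti, Finset.card_filter]
  push_cast
  rfl

lemma hub_formula (hΛ : ∀ c, IsPartition (Λ c)) (i : ZMod ℓ) :
    hub ℓ Λ s i = 2 * mRes ℓ Λ s i - mRes ℓ Λ s (i-1) - mRes ℓ Λ s (i+1) - wMulti ℓ s i := by
  obtain ⟨N, B, hN1, hN, hB⟩ := exists_bounds Λ hΛ
  rw [hub_eq_sum ℓ Λ s hΛ i N B hN1 hN hB,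
      mRes_eq_sum ℓ Λ s hΛ i N B hN1 hN hB,
      mRes_eq_sum ℓ Λ s hΛ (i-1) N B hN1 hN hB,
      mRes_eq_sum ℓ Λ s hΛ (i+1) N B hN1 hN hB,
      wMulti_eq_sum ℓ s i]
  have : ∀ c : Fin r, ∑ b ∈ Finset.range N, Hterm ℓ (Λ c) (s c) i b
      = (∑ b ∈ Finset.range N, Gterm ℓ (Λ c) (s c) i b) - (if s c = i then 1 else 0) :=
    fun c => sum_Hterm ℓ (Λ c) (hΛ c) (s c) i N hN1 (fun b hb => hN c b hb)
  rw [Finset.sum_congr rfl (fun c _ => this c), Finset.sum_sub_distrib]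
  have hG : ∀ c : Fin r, ∑ b ∈ Finset.range N, Gterm ℓ (Λ c) (s c) i b
      = 2 * (∑ b ∈ Finset.range N, cnt ℓ (Λ c b) (tres ℓ (s c) i b))
        - (∑ b ∈ Finset.range N, cnt ℓ (Λ c b) (tres ℓ (s c) (i-1) b))
        - (∑ b ∈ Finset.range N, cnt ℓ (Λ c b) (tres ℓ (s c) (i+1) b)) := by
    intro c
    rw [Finset.mul_sum, ← Finset.sum_sub_distrib, ← Finset.sum_sub_distrib]
    refine Finset.sum_congr rfl fun b _ => ?_
    rw [Gterm, tres_down, tres_up]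
  rw [Finset.sum_congr rfl (fun c _ => hG c)]
  rw [Finset.sum_sub_distrib, Finset.sum_sub_distrib, ← Finset.mul_sum]

lemma size_formula [NeZero ℓ] (hΛ : ∀ c, IsPartition (Λ c)) :
    ((mNodes Λ).ncard : ℤ) = ∑ i : ZMod ℓ, mRes ℓ Λ s i := by
  classical
  obtain ⟨N, B, hN1, hN, hB⟩ := exists_bounds Λ hΛ
  · have hL : ((mNodes Λ).ncard : ℤ)
        = ∑ c : Fin r, ∑ b ∈ Finset.range N, (Λ c b : ℤ) := by
      have hset : mNodes Λ = {q : ℕ × ℕ × Fin r | q.1 < Λ q.2.2 q.2.1} := rfl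
      rw [hset, set_ncard_eq_sum N B _ ?hb]
      case hb =>
        rintro ⟨a, b, c⟩ h1
        dsimp only at h1 ⊢
        constructor
        · have := hB c b; omega
        · by_contra hcon
          have := hN c b (by omega)
          omega
      refine Finset.sum_congr rfl fun c _ => Finset.sum_congr rfl fun b _ => ?_
      have : Finset.filter (fun a => a < Λ c b) (Finset.range (B+1)) = Finset.range (Λ c b) := by
        ext a
        simp only [Finset.mem_filter, Finset.mem_range]
        have := hB c b; omega
      rw [← Finset.sum_filter, this]
      simp
    rw [hL]
    have hR : ∀ i, mRes ℓ Λ s i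
        = ∑ c : Fin r, ∑ b ∈ Finset.range N, cnt ℓ (Λ c b) (tres ℓ (s c) i b) :=
      fun i => mRes_eq_sum ℓ Λ s hΛ i N B hN1 hN hB
    rw [Finset.sum_congr rfl (fun i _ => hR i)]
    refine Eq.symm ?_
    rw [Finset.sum_comm]
    refine Eq.symm (Finset.sum_congr rfl fun c _ => ?_)
    refine Eq.symm ?_
    rw [Finset.sum_comm]
    refine Eq.symm (Finset.sum_congr rfl fun b _ => ?_)
    -- ∑ i, cnt ℓ (Λ c b) (tres ℓ (s c) i b) = Λ c b
    refine Eq.symm ?_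
    have h1 : ∑ i : ZMod ℓ, cnt ℓ (Λ c b) (tres ℓ (s c) i b)
        = ∑ t : ZMod ℓ, cnt ℓ (Λ c b) t := by
      apply Fintype.sum_equiv (Equiv.subLeft ((b : ZMod ℓ) + s c))
      intro i
      rw [tres]
      rfl
    rw [h1]
    simp only [cnt]
    rw [Finset.sum_comm]
    have : ∀ a ∈ Finset.range (Λ c b),
        (∑ t : ZMod ℓ, if (a : ZMod ℓ) = t then (1:ℤ) else 0) = 1 := by
      intro a _
      rw [Finset.sum_ite_eq]
      simp
    rw [Finset.sum_congr rfl this]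
    simp
end Main

lemma const_of_lap (ℓ : ℕ) [NeZero ℓ] (δ : ZMod ℓ → ℤ)
    (h : ∀ i, 2 * δ i = δ (i-1) + δ (i+1)) : ∀ i, δ i = δ 0 := by
  have step : ∀ i : ZMod ℓ, δ i = δ (i+1) := by
    have e1 : ∑ i : ZMod ℓ, δ (i+1)^2 = ∑ i : ZMod ℓ, δ i ^ 2 :=
      Fintype.sum_equiv (Equiv.addRight 1) _ _ (fun i => rfl)
    have e2 : ∑ i : ZMod ℓ, δ i * δ (i-1) = ∑ i : ZMod ℓ, δ (i+1) * δ i :=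
      Fintype.sum_equiv (Equiv.subRight 1) _ _ (fun i => by
        simp only [Equiv.subRight_apply, sub_add_cancel])
    have key : ∑ i : ZMod ℓ, (δ i - δ (i+1))^2
        = ∑ i : ZMod ℓ, δ i * (2 * δ i - δ (i-1) - δ (i+1)) := by
      rw [← sub_eq_zero, ← Finset.sum_sub_distrib]
      have : ∀ i ∈ (Finset.univ : Finset (ZMod ℓ)),
          (δ i - δ (i+1))^2 - δ i * (2 * δ i - δ (i-1) - δ (i+1))
            = (δ (i+1)^2 - δ i^2) + (δ i * δ (i-1) - δ (i+1) * δ i) := by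
        intro i _; ring
      rw [Finset.sum_congr rfl this, Finset.sum_add_distrib, Finset.sum_sub_distrib,
        Finset.sum_sub_distrib, e1, e2]
      ring
    have hz : ∑ i : ZMod ℓ, (δ i - δ (i+1))^2 = 0 := by
      rw [key, Finset.sum_eq_zero]
      intro i _
      have := h i
      have hzero : 2 * δ i - δ (i-1) - δ (i+1) = 0 := by omega
      rw [hzero, mul_zero]
    intro i
    have hterm : (δ i - δ (i+1))^2 = 0 := by
      have hnn : ∀ j ∈ (Finset.univ : Finset (ZMod ℓ)), (0:ℤ) ≤ (δ j - δ (j+1))^2 :=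
        fun j _ => sq_nonneg _
      have := (Finset.sum_eq_zero_iff_of_nonneg hnn).mp hz i (Finset.mem_univ i)
      exact this
    have := sq_eq_zero_iff.mp hterm
    omega
  have hnat : ∀ n : ℕ, δ (n : ZMod ℓ) = δ 0 := by
    intro n
    induction n with
    | zero => norm_num
    | succ n ih => push_cast; rw [← step (n : ZMod ℓ)]; exact ih
  intro i
  have : ((i.val : ℕ) : ZMod ℓ) = i := ZMod.natCast_rightInverse i
  rw [← this, hnat]


/-- two charged multipartitions with the same multicharge have the
same residue vector iff they have the same hub and the same size, iff they have
the same hub and the same weight. -/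
theorem stmt_8 (ℓ r : ℕ) [NeZero ℓ] (Λ M : Fin r → ℕ → ℕ)
    (hΛ : ∀ c, IsPartition (Λ c)) (hM : ∀ c, IsPartition (M c))
    (s : Fin r → ZMod ℓ) :
    ((∀ i : ZMod ℓ, mRes ℓ Λ s i = mRes ℓ M s i) ↔
      ((∀ i : ZMod ℓ, hub ℓ Λ s i = hub ℓ M s i) ∧
        (mNodes Λ).ncard = (mNodes M).ncard)) ∧
    ((∀ i : ZMod ℓ, mRes ℓ Λ s i = mRes ℓ M s i) ↔
      ((∀ i : ZMod ℓ, hub ℓ Λ s i = hub ℓ M s i) ∧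
        weight ℓ Λ s = weight ℓ M s)) := by
  have hubΛ := hub_formula ℓ Λ s hΛ
  have hubM := hub_formula ℓ M s hM
  have szΛ := size_formula ℓ Λ s hΛ
  have szM := size_formula ℓ M s hM
  -- forward: equal residues gives everything
  have fwd_hub : (∀ i : ZMod ℓ, mRes ℓ Λ s i = mRes ℓ M s i) →
      (∀ i : ZMod ℓ, hub ℓ Λ s i = hub ℓ M s i) := by
    intro h i
    rw [hubΛ i, hubM i, h i, h (i-1), h (i+1)]
  have fwd_sz : (∀ i : ZMod ℓ, mRes ℓ Λ s i = mRes ℓ M s i) →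
      (mNodes Λ).ncard = (mNodes M).ncard := by
    intro h
    have : ((mNodes Λ).ncard : ℤ) = ((mNodes M).ncard : ℤ) := by
      rw [szΛ, szM]
      exact Finset.sum_congr rfl fun i _ => h i
    exact_mod_cast this
  have fwd_wt : (∀ i : ZMod ℓ, mRes ℓ Λ s i = mRes ℓ M s i) →
      weight ℓ Λ s = weight ℓ M s := by
    intro h
    unfold weight
    simp only [h]
  -- from hub equality: the difference is constant
  have lap : (∀ i : ZMod ℓ, hub ℓ Λ s i = hub ℓ M s i) →
      ∀ i : ZMod ℓ, mRes ℓ Λ s i - mRes ℓ M s i = mRes ℓ Λ s 0 - mRes ℓ M s 0 := by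
    intro hhub
    exact const_of_lap ℓ (fun i => mRes ℓ Λ s i - mRes ℓ M s i) (fun i => by
      have h1 := hubΛ i; have h2 := hubM i; have h3 := hhub i
      omega)
  constructor
  · constructor
    · intro h; exact ⟨fwd_hub h, fwd_sz h⟩
    · rintro ⟨hhub, hsz⟩
      have hlap := lap hhub
      have hsum : ∑ i : ZMod ℓ, (mRes ℓ Λ s i - mRes ℓ M s i) = 0 := by
        rw [Finset.sum_sub_distrib, ← szΛ, ← szM, hsz]
        ring
      have hconst : ∑ i : ZMod ℓ, (mRes ℓ Λ s i - mRes ℓ M s i)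
          = (ℓ : ℤ) * (mRes ℓ Λ s 0 - mRes ℓ M s 0) := by
        rw [Finset.sum_congr rfl (fun i _ => hlap i), Finset.sum_const,
          Finset.card_univ, ZMod.card, nsmul_eq_mul]
      have hc : mRes ℓ Λ s 0 - mRes ℓ M s 0 = 0 := by
        rw [hconst] at hsum
        have hℓ : (ℓ : ℤ) ≠ 0 := by exact_mod_cast NeZero.ne ℓ
        exact (mul_eq_zero.mp hsum).resolve_left hℓ
      intro i
      have := hlap i
      omega
  · constructor
    · intro h; exact ⟨fwd_hub h, fwd_wt h⟩
    · rintro ⟨hhub, hwt⟩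
      rcases Nat.eq_zero_or_pos r with hr | hr
      · subst hr
        intro i
        have hempty : ∀ (Λ' : Fin 0 → ℕ → ℕ),
            (mNodes Λ' ∩ {q : ℕ × ℕ × Fin 0 | nodeRes ℓ (s q.2.2) (q.1, q.2.1) = i}) = ∅ :=
          fun Λ' => Set.eq_empty_of_isEmpty _
        rw [mRes, mRes, hempty Λ, hempty M]
      · have hlap := lap hhub
        -- quadratic parts agree
        have hQ : ∑ i : ZMod ℓ, ((mRes ℓ Λ s i - mRes ℓ Λ s (i + 1) : ℤ) : ℚ) ^ 2
            = ∑ i : ZMod ℓ, ((mRes ℓ M s i - mRes ℓ M s (i + 1) : ℤ) : ℚ) ^ 2 := by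
          refine Finset.sum_congr rfl fun i _ => ?_
          have h1 := hlap i; have h2 := hlap (i+1)
          have : mRes ℓ Λ s i - mRes ℓ Λ s (i + 1) = mRes ℓ M s i - mRes ℓ M s (i + 1) := by
            omega
          rw [this]
        have hlin : ∑ j : Fin r, ((mRes ℓ Λ s (s j) : ℚ)) = ∑ j : Fin r, ((mRes ℓ M s (s j)) : ℚ) := by
          have hw := hwt
          unfold weight at hw
          rw [hQ] at hw
          linarith
        have hsum0 : ∑ j : Fin r, (((mRes ℓ Λ s (s j) - mRes ℓ M s (s j)) : ℤ) : ℚ) = 0 := by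
          push_cast
          rw [Finset.sum_sub_distrib]
          rw [hlin]
          ring
        have hconst : ∑ j : Fin r, (((mRes ℓ Λ s (s j) - mRes ℓ M s (s j)) : ℤ) : ℚ)
            = (r : ℚ) * ((mRes ℓ Λ s 0 - mRes ℓ M s 0 : ℤ) : ℚ) := by
          rw [Finset.sum_congr rfl (fun j _ => by rw [hlap (s j)])]
          rw [Finset.sum_const, Finset.card_univ, Fintype.card_fin, nsmul_eq_mul]
        have hc : ((mRes ℓ Λ s 0 - mRes ℓ M s 0 : ℤ) : ℚ) = 0 := by
          rw [hconst] at hsum0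
          have hr' : (r : ℚ) ≠ 0 := by positivity
          exact (mul_eq_zero.mp hsum0).resolve_left hr'
        have hc' : mRes ℓ Λ s 0 - mRes ℓ M s 0 = 0 := by exact_mod_cast hc
        intro i
        have := hlap i
        omega
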